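/- Consider a packing integer program (P) and a partition J of the column index set of A such that the packing interaction graph G^{pack}_{A,J} is a cycle of length K. Then: (1) if K = 3k with k ∈ ℤ_{++}, z^{N.S.} ≤ (3/2) · z^I; (2) if K = 3k+1 with k ∈ ℤ_{++}, z^{N.S.} ≤ ((3k+1)/(2k)) · z^I; (3) if K = 3k+2 with k ∈ ℤ_{++}, z^{N.S.} ≤ ((3k+2)/(2k+1)) · z^I. -/

import Mathlib

open Finset

/-- The dot product `cᵀx` of two vectors in `ℚⁿ`. -/
def dotp {n : ℕ} (c x : Fin n → ℚ) : ℚ := ∑ j, c j * x j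

/-- The feasible region `P` of the MILP `Ax ≤ b`, `x ≥ 0`, `x_j ∈ ℤ` for `j ∈ L`. -/
def mipSet {m n : ℕ} (A : Matrix (Fin m) (Fin n) ℚ) (b : Fin m → ℚ)
    (L : Finset (Fin n)) : Set (Fin n → ℚ) :=
  {x | (∀ i, ∑ j, A i j * x j ≤ b i) ∧ (∀ j, 0 ≤ x j) ∧ ∀ j ∈ L, ∃ z : ℤ, x j = (z : ℚ)}

/-- The LP relaxation `P^LP`. -/
def lpSet {m n : ℕ} (A : Matrix (Fin m) (Fin n) ℚ) (b : Fin m → ℚ) : Set (Fin n → ℚ) :=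
  {x | (∀ i, ∑ j, A i j * x j ≤ b i) ∧ (∀ j, 0 ≤ x j)}

/-- The integer hull `P^I = conv(P)`. -/
def intHull {m n : ℕ} (A : Matrix (Fin m) (Fin n) ℚ) (b : Fin m → ℚ)
    (L : Finset (Fin n)) : Set (Fin n → ℚ) :=
  convexHull ℚ (mipSet A b L)

/-- The sparse closure `P^(N)`: the LP relaxation intersected with all halfspaces
`αᵀx ≤ β` that are valid for `P^I` and whose support is contained in `N`. -/
def sparseClosure {m n : ℕ} (A : Matrix (Fin m) (Fin n) ℚ) (b : Fin m → ℚ)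
    (L : Finset (Fin n)) (N : Set (Fin n)) : Set (Fin n → ℚ) :=
  lpSet A b ∩
    ⋂ (α : Fin n → ℚ) (β : ℚ)
      (_ : (∀ x ∈ intHull A b L, dotp α x ≤ β) ∧ ∀ j, α j ≠ 0 → j ∈ N),
      {x | dotp α x ≤ β}

/-- The packing interaction graph of `A` w.r.t. the partition of columns given by
`π : Fin n → Fin q` (part `J_u = π⁻¹(u)`): nodes `u ≠ v` are adjacent iff some row of `A`
has nonzero entries in a column of `J_u` and in a column of `J_v`. -/
def packGraph {m n q : ℕ} (A : Matrix (Fin m) (Fin n) ℚ) (π : Fin n → Fin q) :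
    SimpleGraph (Fin q) where
  Adj u v := u ≠ v ∧ ∃ i a₁ a₂, π a₁ = u ∧ π a₂ = v ∧ A i a₁ ≠ 0 ∧ A i a₂ ≠ 0
  symm := by
    constructor
    rintro u v ⟨huv, i, a₁, a₂, h1, h2, h3, h4⟩
    exact ⟨huv.symm, i, a₂, a₁, h2, h1, h4, h3⟩
  loopless := by
    constructor
    rintro u ⟨h, -⟩
    exact h rfl

/-- The sparse closure `P^(S)` for a set `S` of nodes of the packing interaction graph. -/
def blockClosure {m n q : ℕ} (A : Matrix (Fin m) (Fin n) ℚ) (b : Fin m → ℚ)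
    (L : Finset (Fin n)) (π : Fin n → Fin q) (S : Finset (Fin q)) : Set (Fin n → ℚ) :=
  sparseClosure A b L {j | π j ∈ S}

/-- The column block-sparse closure `P^{𝒱,P} = ⋂_{S ∈ 𝒱} P^(S)` for a support list `𝒱`. -/
def listClosure {m n q : ℕ} (A : Matrix (Fin m) (Fin n) ℚ) (b : Fin m → ℚ)
    (L : Finset (Fin n)) (π : Fin n → Fin q) (𝒱 : Finset (Finset (Fin q))) :
    Set (Fin n → ℚ) :=
  ⋂ S ∈ 𝒱, blockClosure A b L π S

/-- The super sparse closure `P^{S.S.}`: support list of all singletons. -/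
def superSparseClosure {m n q : ℕ} (A : Matrix (Fin m) (Fin n) ℚ) (b : Fin m → ℚ)
    (L : Finset (Fin n)) (π : Fin n → Fin q) : Set (Fin n → ℚ) :=
  ⋂ u : Fin q, blockClosure A b L π {u}

/-- The natural sparse closure `P^{N.S.}`: for each row `i` of `A`, add all cuts supported
on the variables of the blocks touched by row `i`. -/
def naturalSparseClosure {m n q : ℕ} (A : Matrix (Fin m) (Fin n) ℚ) (b : Fin m → ℚ)
    (L : Finset (Fin n)) (π : Fin n → Fin q) : Set (Fin n → ℚ) :=
  ⋂ i : Fin m, sparseClosure A b L {j | ∃ j', π j' = π j ∧ A i j' ≠ 0}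

/-- A mixed stable set of `G` subordinate to the collection `𝒱`: a collection `M` of subsets
of vertices, each contained in a member of `𝒱`, pairwise disjoint, with no edge of `G`
between distinct members. -/
def MixedStableSet {V : Type*} (G : SimpleGraph V) (𝒱 : Set (Finset V))
    (M : Finset (Finset V)) : Prop :=
  (∀ s ∈ M, ∃ t ∈ 𝒱, s ⊆ t) ∧
  (∀ s ∈ M, ∀ t ∈ M, s ≠ t → Disjoint s t) ∧
  (∀ s ∈ M, ∀ t ∈ M, s ≠ t → ∀ u ∈ s, ∀ v ∈ t, ¬ G.Adj u v)

-- AUX START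
section Aux

variable {m n K : ℕ}

/-- The coefficient vector of the objective cut supported on blocks in `S`. -/
def cutVec (c : Fin n → ℚ) (π : Fin n → Fin K) (S : Finset (Fin K)) : Fin n → ℚ :=
  fun j => if π j ∈ S then c j else 0

lemma dotp_isLinear (α : Fin n → ℚ) : IsLinearMap ℚ (fun x : Fin n → ℚ => dotp α x) := by
  constructor
  · intro x y
    simp [dotp, mul_add, Finset.sum_add_distrib]
  · intro r x
    simp only [dotp, Pi.smul_apply, smul_eq_mul, Finset.mul_sum]
    exact Finset.sum_congr rfl fun j _ => by ring

lemma dotp_le_on_hull {A : Matrix (Fin m) (Fin n) ℚ} {b : Fin m → ℚ}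
    {L : Finset (Fin n)} {α : Fin n → ℚ} {β : ℚ}
    (h : ∀ v ∈ mipSet A b L, dotp α v ≤ β) :
    ∀ w ∈ intHull A b L, dotp α w ≤ β := by
  intro w hw
  have hconv : Convex ℚ {x : Fin n → ℚ | dotp α x ≤ β} :=
    convex_halfSpace_le (dotp_isLinear α) β
  exact convexHull_min (fun v hv => h v hv) hconv hw

lemma combine_bound
    {A : Matrix (Fin m) (Fin n) ℚ} {b : Fin m → ℚ} {c : Fin n → ℚ} {L : Finset (Fin n)}
    (hA : ∀ i j, 0 ≤ A i j) (hb : ∀ i, 0 ≤ b i) (hc : ∀ j, 0 ≤ c j)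
    {π : Fin n → Fin K} {xI : Fin n → ℚ}
    (hxImax : ∀ x ∈ intHull A b L, dotp c x ≤ dotp c xI)
    (p : ℕ) (S : ℕ → Finset (Fin K))
    (hsep : ∀ s, s < p → ∀ t, t < p → s ≠ t →
      ∀ u ∈ S s, ∀ v ∈ S t, u ≠ v ∧ ¬ (packGraph A π).Adj u v)
    (y : ℕ → Fin n → ℚ) (hy : ∀ t, t < p → y t ∈ mipSet A b L) :
    ∑ t ∈ Finset.range p, dotp (cutVec c π (S t)) (y t) ≤ dotp c xI := by
  classical
  have huniq : ∀ {s t : ℕ}, s < p → t < p → ∀ u : Fin K, u ∈ S s → u ∈ S t → s = t := by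
    intro s t hs ht u h1 h2
    by_contra hne
    exact (hsep s hs t ht hne u h1 u h2).1 rfl
  have hrowu : ∀ (i : Fin m) (s t : ℕ), s < p → t < p →
      (∃ j, π j ∈ S s ∧ A i j ≠ 0) → (∃ j, π j ∈ S t ∧ A i j ≠ 0) → s = t := by
    intro i s t hs ht ⟨j, hj, hAj⟩ ⟨j', hj', hAj'⟩
    by_contra hne
    by_cases hππ : π j = π j'
    · exact hne (huniq hs ht (π j) hj (hππ ▸ hj'))
    · exact (hsep s hs t ht hne (π j) hj (π j') hj').2
        ⟨hππ, i, j, j', rfl, rfl, hAj, hAj'⟩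
  set Y : Fin n → ℚ :=
    fun j => if h : ∃ t, t < p ∧ π j ∈ S t then y h.choose j else 0 with hY
  have hYdef : ∀ j (t : ℕ), t < p → π j ∈ S t → Y j = y t j := by
    intro j t ht hmem
    have h : ∃ t, t < p ∧ π j ∈ S t := ⟨t, ht, hmem⟩
    have hs := h.choose_spec
    rw [hY]
    simp only [dif_pos h]
    rw [huniq hs.1 ht (π j) hs.2 hmem]
  have hY0 : ∀ j, (¬ ∃ t, t < p ∧ π j ∈ S t) → Y j = 0 := by
    intro j h; rw [hY]; simp only [dif_neg h]
  have hYnonneg : ∀ j, 0 ≤ Y j := by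
    intro j
    by_cases h : ∃ t, t < p ∧ π j ∈ S t
    · have hs := h.choose_spec
      rw [hYdef j h.choose hs.1 hs.2]
      exact (hy _ hs.1).2.1 j
    · rw [hY0 j h]
  have hYmem : Y ∈ mipSet A b L := by
    refine ⟨?_, hYnonneg, ?_⟩
    · intro i
      by_cases hex : ∃ t, t < p ∧ ∃ j, π j ∈ S t ∧ A i j ≠ 0
      · obtain ⟨t₀, ht₀, hw₀⟩ := hex
        have hle : ∀ j, A i j * Y j ≤ A i j * y t₀ j := by
          intro j
          by_cases hq : ∃ t, t < p ∧ π j ∈ S t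
          · by_cases hAij : A i j = 0
            · simp [hAij]
            · obtain ⟨t₁, ht₁, hmem₁⟩ := hq
              have h1 : Y j = y t₁ j := hYdef j t₁ ht₁ hmem₁
              have h2 : t₁ = t₀ := hrowu i t₁ t₀ ht₁ ht₀ ⟨j, hmem₁, hAij⟩ hw₀
              rw [h1, h2]
          · rw [hY0 j hq, mul_zero]
            exact mul_nonneg (hA i j) ((hy t₀ ht₀).2.1 j)
        calc ∑ j, A i j * Y j ≤ ∑ j, A i j * y t₀ j :=
              Finset.sum_le_sum fun j _ => hle j
          _ ≤ b i := (hy t₀ ht₀).1 i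
      · have hz : ∀ j, A i j * Y j = 0 := by
          intro j
          by_cases hq : ∃ t, t < p ∧ π j ∈ S t
          · by_cases hAij : A i j = 0
            · rw [hAij, zero_mul]
            · exact absurd ⟨hq.choose, hq.choose_spec.1,
                j, hq.choose_spec.2, hAij⟩ hex
          · rw [hY0 j hq, mul_zero]
        rw [Finset.sum_eq_zero fun j _ => hz j]
        exact hb i
    · intro j hj
      by_cases hq : ∃ t, t < p ∧ π j ∈ S t
      · have hs := hq.choose_spec
        rw [hYdef j hq.choose hs.1 hs.2]
        exact (hy _ hs.1).2.2 j hj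
      · exact ⟨0, by rw [hY0 j hq]; simp⟩
  have heq : ∀ t, t < p → dotp (cutVec c π (S t)) (y t) = dotp (cutVec c π (S t)) Y := by
    intro t ht
    refine Finset.sum_congr rfl fun j _ => ?_
    by_cases hmem : π j ∈ S t
    · rw [hYdef j t ht hmem]
    · simp [cutVec, hmem]
  calc ∑ t ∈ Finset.range p, dotp (cutVec c π (S t)) (y t)
      = ∑ t ∈ Finset.range p, dotp (cutVec c π (S t)) Y := by
        refine Finset.sum_congr rfl fun t ht => heq t (Finset.mem_range.1 ht)
    _ ≤ dotp c Y := by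
        unfold dotp
        rw [Finset.sum_comm]
        refine Finset.sum_le_sum fun j _ => ?_
        rw [← Finset.sum_mul]
        have h1 : ∑ t ∈ Finset.range p, cutVec c π (S t) j ≤ c j := by
          unfold cutVec
          rw [← Finset.sum_filter]
          rw [Finset.sum_const]
          have hcard : ((Finset.range p).filter fun t => π j ∈ S t).card ≤ 1 := by
            refine Finset.card_le_one.2 fun a ha b hb => ?_
            simp only [Finset.mem_filter, Finset.mem_range] at ha hb
            exact huniq ha.1 hb.1 (π j) ha.2 hb.2
          rcases Nat.le_one_iff_eq_zero_or_eq_one.1 hcard with h | h <;>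
            simp [h, hc j]
        exact mul_le_mul_of_nonneg_right h1 (hYnonneg j)
    _ ≤ dotp c xI := hxImax Y (subset_convexHull ℚ _ hYmem)

lemma stable_cut_bound
    {A : Matrix (Fin m) (Fin n) ℚ} {b : Fin m → ℚ} {c : Fin n → ℚ} {L : Finset (Fin n)}
    (hA : ∀ i j, 0 ≤ A i j) (hb : ∀ i, 0 ≤ b i) (hc : ∀ j, 0 ≤ c j)
    {π : Fin n → Fin K} {xI : Fin n → ℚ}
    (hxImax : ∀ x ∈ intHull A b L, dotp c x ≤ dotp c xI)
    (p : ℕ) (S : ℕ → Finset (Fin K))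
    (hsep : ∀ s, s < p → ∀ t, t < p → s ≠ t →
      ∀ u ∈ S s, ∀ v ∈ S t, u ≠ v ∧ ¬ (packGraph A π).Adj u v)
    (hrow : ∀ t, t < p → ∃ i : Fin m, ∀ u ∈ S t, ∃ j, π j = u ∧ A i j ≠ 0)
    (x : Fin n → ℚ) (hx : x ∈ naturalSparseClosure A b L π) :
    ∑ t ∈ Finset.range p, dotp (cutVec c π (S t)) x ≤ dotp c xI := by
  classical
  by_contra H
  push_neg at H
  have key : ∀ r, r ≤ p → ∃ y : ℕ → Fin n → ℚ,
      (∀ t, t < r → y t ∈ mipSet A b L) ∧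
      dotp c xI < ∑ t ∈ Finset.range r, dotp (cutVec c π (S t)) (y t) +
        ∑ t ∈ Finset.Ico r p, dotp (cutVec c π (S t)) x := by
    intro r
    induction r with
    | zero =>
      intro _
      refine ⟨fun _ => 0, fun t ht => absurd ht (Nat.not_lt_zero t), ?_⟩
      rw [Finset.sum_range_zero, zero_add, ← Finset.range_eq_Ico]
      exact H
    | succ r ih =>
      intro hr1
      have hrp : r < p := hr1
      obtain ⟨y, hy, hlt⟩ := ih (le_of_lt hrp)
      rw [Finset.sum_eq_sum_Ico_succ_bot hrp] at hlt
      set β : ℚ := dotp c xI - ∑ t ∈ Finset.range r, dotp (cutVec c π (S t)) (y t) -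
        ∑ t ∈ Finset.Ico (r+1) p, dotp (cutVec c π (S t)) x with hβ
      have hviol : β < dotp (cutVec c π (S r)) x := by rw [hβ]; linarith
      obtain ⟨i, hi⟩ := hrow r hrp
      have hxi := Set.mem_iInter.1 hx i
      have hnotvalid : ¬ ∀ w ∈ intHull A b L, dotp (cutVec c π (S r)) w ≤ β := by
        intro hvalid
        have hsupp : ∀ j, cutVec c π (S r) j ≠ 0 →
            j ∈ {j | ∃ j', π j' = π j ∧ A i j' ≠ 0} := by
          intro j hj
          have hmem : π j ∈ S r := by
            by_contra hn
            exact hj (by simp [cutVec, hn])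
          obtain ⟨j', hj', hAj'⟩ := hi (π j) hmem
          exact ⟨j', hj', hAj'⟩
        have hx3 := Set.mem_iInter.1 (Set.mem_iInter.1
          (Set.mem_iInter.1 hxi.2 (cutVec c π (S r))) β) ⟨hvalid, hsupp⟩
        exact absurd (hx3 : dotp (cutVec c π (S r)) x ≤ β) (not_le.2 hviol)
      push_neg at hnotvalid
      obtain ⟨w, hw, hwβ⟩ := hnotvalid
      have hexv : ∃ v ∈ mipSet A b L, β < dotp (cutVec c π (S r)) v := by
        by_contra hno
        push_neg at hno
        exact absurd (dotp_le_on_hull hno w hw) (not_le.2 hwβ)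
      obtain ⟨v, hv, hvβ⟩ := hexv
      refine ⟨Function.update y r v, ?_, ?_⟩
      · intro t ht
        rcases eq_or_ne t r with rfl | hne
        · simpa [Function.update_self] using hv
        · rw [Function.update_of_ne hne]
          exact hy t (lt_of_le_of_ne (Nat.lt_succ_iff.1 ht) hne)
      · rw [Finset.sum_range_succ]
        have h1 : ∑ t ∈ Finset.range r, dotp (cutVec c π (S t)) (Function.update y r v t)
            = ∑ t ∈ Finset.range r, dotp (cutVec c π (S t)) (y t) := by
          refine Finset.sum_congr rfl fun t ht => ?_
          rw [Function.update_of_ne (Nat.ne_of_lt (Finset.mem_range.1 ht))]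
        rw [h1, Function.update_self]
        linarith
  obtain ⟨y, hy, hfin⟩ := key p le_rfl
  rw [Finset.Ico_self, Finset.sum_empty, add_zero] at hfin
  exact absurd (combine_bound hA hb hc hxImax p S hsep y hy) (not_le.2 hfin)

lemma modeq_char {K a b : ℕ} (hK : 2 ≤ K) (ha : a < K) (hb : b < K) :
    ((K - b) + a) % K = 1 ↔ a = (b + 1) % K := by
  have h1 : ((K - b) + a) + b = a + K := by omega
  constructor
  · intro h
    have h2 : ((K - b) + a) ≡ 1 [MOD K] := by
      show ((K - b) + a) % K = 1 % K
      rw [h, Nat.mod_eq_of_lt (by omega)]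
    have h3 : a + K ≡ 1 + b [MOD K] := by
      have := h2.add_right b
      rwa [h1] at this
    have h4 : a ≡ 1 + b [MOD K] :=
      (show a ≡ a + K [MOD K] from (Nat.add_mod_right a K).symm).trans h3
    calc a = a % K := (Nat.mod_eq_of_lt ha).symm
      _ = (1 + b) % K := h4
      _ = (b + 1) % K := by rw [Nat.add_comm]
  · intro h
    have ha2 : a ≡ b + 1 [MOD K] := by
      show a % K = (b + 1) % K
      rw [Nat.mod_eq_of_lt ha]; exact h
    have h3 : a + (K - b) ≡ (b + 1) + (K - b) [MOD K] := ha2.add_right _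
    have h4 : (b + 1) + (K - b) = K + 1 := by omega
    rw [h4] at h3
    have h5 : (K - b) + a = a + (K - b) := Nat.add_comm _ _
    rw [h5]
    calc (a + (K - b)) % K = (K + 1) % K := h3
      _ = 1 % K := Nat.add_mod_left K 1
      _ = 1 := Nat.mod_eq_of_lt (by omega)

lemma shift_char {K t a b : ℕ} (hK : 2 ≤ K) (ha : a < K) :
    (t + a) % K = ((t + b) % K + 1) % K ↔ a = (b + 1) % K := by
  have h1 : ((t + b) % K + 1) % K = (t + (b + 1)) % K := by
    conv_rhs => rw [show t + (b+1) = (t + b) + 1 by omega, Nat.add_mod (t+b) 1 K]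
    rw [Nat.mod_eq_of_lt (show 1 < K by omega)]
  rw [h1]
  constructor
  · intro h
    have h2 : a ≡ b + 1 [MOD K] := Nat.ModEq.add_left_cancel' t h
    rw [← Nat.mod_eq_of_lt ha]
    exact h2
  · intro h
    show (t + a) ≡ (t + (b+1)) [MOD K]
    refine Nat.ModEq.add_left t ?_
    show a % K = (b + 1) % K
    rw [Nat.mod_eq_of_lt ha]; exact h

end Aux
-- AUX END

-- MASTER START
lemma master_bound
    {m n K : ℕ}
    (A : Matrix (Fin m) (Fin n) ℚ) (b : Fin m → ℚ) (c : Fin n → ℚ) (L : Finset (Fin n))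
    (hA : ∀ i j, 0 ≤ A i j) (hb : ∀ i, 0 ≤ b i) (hc : ∀ j, 0 ≤ c j)
    (π : Fin n → Fin K) (hK : 3 ≤ K)
    (e0 : packGraph A π ≃g SimpleGraph.cycleGraph K)
    (xI : Fin n → ℚ)
    (hxImax : ∀ x ∈ intHull A b L, dotp c x ≤ dotp c xI)
    (k e : ℕ) (hk : 1 ≤ k) (he : e ≤ 2) (hKeq : K = 3 * k + e)
    (x : Fin n → ℚ) (hx : x ∈ naturalSparseClosure A b L π) :
    (2 * (k : ℚ) + (if e = 2 then 1 else 0)) * dotp c x ≤ (K : ℚ) * dotp c xI := by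
  classical
  have hK0 : 0 < K := by omega
  set W : Fin K → ℕ → Fin K :=
    fun t a => e0.symm ⟨(t.val + a) % K, Nat.mod_lt _ hK0⟩ with hW
  -- injectivity of offsets
  have hWinj : ∀ (t : Fin K) (a bb : ℕ), a < K → bb < K → W t a = W t bb → a = bb := by
    intro t a bb ha hbb h
    have h2 : ((t.val + a) % K : ℕ) = (t.val + bb) % K := by
      have := e0.symm.toEquiv.injective h
      simpa [Fin.ext_iff] using this
    have h3 : a ≡ bb [MOD K] := Nat.ModEq.add_left_cancel' t.val h2
    rw [← Nat.mod_eq_of_lt ha, ← Nat.mod_eq_of_lt hbb]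
    exact h3
  -- adjacency characterization
  have hAdjChar : ∀ (t : Fin K) (a bb : ℕ), a < K → bb < K →
      ((packGraph A π).Adj (W t a) (W t bb) ↔ (a = (bb + 1) % K ∨ bb = (a + 1) % K)) := by
    intro t a bb ha hbb
    rw [hW]
    rw [SimpleGraph.Iso.map_adj_iff e0.symm]
    rw [SimpleGraph.cycleGraph_adj']
    rw [Fin.sub_def, Fin.sub_def]
    simp only []
    constructor
    · rintro (h | h)
      · left
        exact (shift_char (by omega) (show a < K from ha)).1
          ((modeq_char (by omega) (Nat.mod_lt _ hK0) (Nat.mod_lt _ hK0)).1 h)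
      · right
        exact (shift_char (by omega) (show bb < K from hbb)).1
          ((modeq_char (by omega) (Nat.mod_lt _ hK0) (Nat.mod_lt _ hK0)).1 h)
    · rintro (h | h)
      · left
        exact (modeq_char (by omega) (Nat.mod_lt _ hK0) (Nat.mod_lt _ hK0)).2
          ((shift_char (by omega) (show a < K from ha)).2 h)
      · right
        exact (modeq_char (by omega) (Nat.mod_lt _ hK0) (Nat.mod_lt _ hK0)).2
          ((shift_char (by omega) (show bb < K from hbb)).2 h)
  -- separation helper
  have hsepW : ∀ (t : Fin K) (a bb : ℕ), a < K → bb < K →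
      ((a + 2 ≤ bb ∧ bb + 2 ≤ a + K) ∨ (bb + 2 ≤ a ∧ a + 2 ≤ bb + K)) →
      W t a ≠ W t bb ∧ ¬ (packGraph A π).Adj (W t a) (W t bb) := by
    intro t a bb ha hbb hcond
    constructor
    · intro h
      have := hWinj t a bb ha hbb h
      omega
    · intro h
      rw [hAdjChar t a bb ha hbb] at h
      have hb1 : (bb + 1) % K = bb + 1 ∨ ((bb + 1) % K = 0 ∧ bb + 1 = K) := by
        rcases Nat.lt_or_ge (bb + 1) K with h' | h'
        · exact Or.inl (Nat.mod_eq_of_lt h')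
        · have hbe : bb + 1 = K := by omega
          exact Or.inr ⟨by rw [hbe, Nat.mod_self], hbe⟩
      have ha1 : (a + 1) % K = a + 1 ∨ ((a + 1) % K = 0 ∧ a + 1 = K) := by
        rcases Nat.lt_or_ge (a + 1) K with h' | h'
        · exact Or.inl (Nat.mod_eq_of_lt h')
        · have hae : a + 1 = K := by omega
          exact Or.inr ⟨by rw [hae, Nat.mod_self], hae⟩
      rcases h with h | h
      · rcases hb1 with h' | ⟨h', h''⟩ <;> omega
      · rcases ha1 with h' | ⟨h', h''⟩ <;> omega
  -- consecutive offsets are adjacent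
  have hAdjSucc : ∀ (t : Fin K) (a : ℕ), a + 1 < K →
      (packGraph A π).Adj (W t a) (W t (a + 1)) := by
    intro t a ha
    rw [hAdjChar t a (a + 1) (by omega) ha]
    exact Or.inr (Nat.mod_eq_of_lt ha).symm
  -- the stable families
  set SF : Fin K → ℕ → Finset (Fin K) :=
    fun t r => if r < k then {W t (3 * r), W t (3 * r + 1)}
      else if e = 2 then {W t (3 * k)} else ∅ with hSF
  have hmem_off : ∀ (t : Fin K) (r : ℕ), r < k + 1 → ∀ u ∈ SF t r,
      ∃ a, u = W t a ∧ ((r < k ∧ (a = 3 * r ∨ a = 3 * r + 1)) ∨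
        (r = k ∧ e = 2 ∧ a = 3 * k)) := by
    intro t r hr u hu
    simp only [hSF] at hu
    by_cases hrk : r < k
    · rw [if_pos hrk] at hu
      rcases Finset.mem_insert.1 hu with h | h
      · exact ⟨3 * r, h, Or.inl ⟨hrk, Or.inl rfl⟩⟩
      · exact ⟨3 * r + 1, Finset.mem_singleton.1 h, Or.inl ⟨hrk, Or.inr rfl⟩⟩
    · rw [if_neg hrk] at hu
      have hrk2 : r = k := by omega
      by_cases he2 : e = 2
      · rw [if_pos he2] at hu
        exact ⟨3 * k, Finset.mem_singleton.1 hu, Or.inr ⟨hrk2, he2, rfl⟩⟩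
      · rw [if_neg he2] at hu
        exact absurd hu (Finset.notMem_empty u)
  -- the key per-rotation bound
  have hrot : ∀ t : Fin K,
      ∑ r ∈ Finset.range (k + 1), dotp (cutVec c π (SF t r)) x ≤ dotp c xI := by
    intro t
    refine stable_cut_bound hA hb hc hxImax (k + 1) (SF t) ?_ ?_ x hx
    · -- separation
      intro s hs t' ht' hne u hu v hv
      obtain ⟨a, rfl, hca⟩ := hmem_off t s hs u hu
      obtain ⟨bb, rfl, hcb⟩ := hmem_off t t' ht' v hv
      refine hsepW t a bb (by omega) (by omega) (by omega)
    · -- rows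
      intro r hr
      by_cases hrk : r < k
      · obtain ⟨hne, i, a₁, a₂, h1, h2, h3, h4⟩ := hAdjSucc t (3 * r) (by omega)
        refine ⟨i, fun u hu => ?_⟩
        simp only [hSF] at hu
        rw [if_pos hrk] at hu
        rcases Finset.mem_insert.1 hu with h | h
        · exact ⟨a₁, by rw [h1, h], h3⟩
        · exact ⟨a₂, by rw [h2, Finset.mem_singleton.1 h], h4⟩
      · have hrk2 : r = k := by omega
        by_cases he2 : e = 2
        · obtain ⟨hne, i, a₁, a₂, h1, h2, h3, h4⟩ := hAdjSucc t (3 * k) (by omega)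
          refine ⟨i, fun u hu => ?_⟩
          simp only [hSF] at hu
          rw [hrk2, if_neg (lt_irrefl k), if_pos he2] at hu
          exact ⟨a₁, by rw [h1, Finset.mem_singleton.1 hu], h3⟩
        · obtain ⟨hne, i, a₁, a₂, h1, h2, h3, h4⟩ := hAdjSucc t 0 (by omega)
          refine ⟨i, fun u hu => ?_⟩
          simp only [hSF] at hu
          rw [hrk2, if_neg (lt_irrefl k), if_neg he2] at hu
          exact absurd hu (Finset.notMem_empty u)
  -- fiber sums
  set f : Fin K → ℚ := fun u => ∑ j, if π j = u then c j * x j else 0 with hf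
  have hcut_sum : ∀ S : Finset (Fin K), dotp (cutVec c π S) x = ∑ u ∈ S, f u := by
    intro S
    calc dotp (cutVec c π S) x
        = ∑ j, if π j ∈ S then c j * x j else 0 := by
          refine Finset.sum_congr rfl fun j _ => ?_
          unfold cutVec
          split_ifs <;> ring
      _ = ∑ j, ∑ u ∈ S, if π j = u then c j * x j else 0 := by
          refine Finset.sum_congr rfl fun j _ => ?_
          rw [Finset.sum_ite_eq S (π j) (fun _ => c j * x j)]
      _ = ∑ u ∈ S, f u := Finset.sum_comm
  have hf_total : ∑ u : Fin K, f u = dotp c x := by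
    calc ∑ u : Fin K, f u
        = ∑ j, ∑ u : Fin K, if π j = u then c j * x j else 0 := Finset.sum_comm
      _ = dotp c x := by
          refine Finset.sum_congr rfl fun j _ => ?_
          rw [Finset.sum_ite_eq Finset.univ (π j) (fun _ => c j * x j)]
          simp
  have hshift : ∀ a : ℕ, a < K → ∑ t : Fin K, f (W t a) = dotp c x := by
    intro a ha
    rw [← hf_total]
    refine Fintype.sum_bijective (fun t : Fin K => W t a) ?_ _ _ (fun t => rfl)
    rw [Fintype.bijective_iff_injective_and_card]
    refine ⟨fun t t' h => ?_, rfl⟩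
    have h2 : ((t.val + a) % K : ℕ) = (t'.val + a) % K := by
      have := e0.symm.toEquiv.injective h
      simpa [Fin.ext_iff] using this
    have h3 : t.val ≡ t'.val [MOD K] := by
      have := (Nat.ModEq.add_right_cancel' a (h2 : (t.val + a) ≡ (t'.val + a) [MOD K]))
      exact this
    have h4 : t.val = t'.val := by
      rw [← Nat.mod_eq_of_lt t.isLt, ← Nat.mod_eq_of_lt t'.isLt]
      exact h3
    exact Fin.ext h4
  -- compute the per-rotation sums
  have hsum_t : ∀ t : Fin K,
      ∑ r ∈ Finset.range (k + 1), dotp (cutVec c π (SF t r)) x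
        = ∑ r ∈ Finset.range k, (f (W t (3 * r)) + f (W t (3 * r + 1)))
          + (if e = 2 then f (W t (3 * k)) else 0) := by
    intro t
    rw [Finset.sum_range_succ]
    congr 1
    · refine Finset.sum_congr rfl fun r hr => ?_
      have hrk := Finset.mem_range.1 hr
      rw [hcut_sum]
      simp only [hSF]
      rw [if_pos hrk]
      rw [Finset.sum_pair]
      intro h
      have := hWinj t (3 * r) (3 * r + 1) (by omega) (by omega) h
      omega
    · rw [hcut_sum]
      simp only [hSF]
      rw [if_neg (lt_irrefl k)]
      by_cases he2 : e = 2
      · rw [if_pos he2, if_pos he2, Finset.sum_singleton]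
      · rw [if_neg he2, if_neg he2, Finset.sum_empty]
  -- sum over all rotations
  have htotal : ∑ t : Fin K, ∑ r ∈ Finset.range (k + 1), dotp (cutVec c π (SF t r)) x
      = (2 * (k : ℚ) + (if e = 2 then 1 else 0)) * dotp c x := by
    calc ∑ t : Fin K, ∑ r ∈ Finset.range (k + 1), dotp (cutVec c π (SF t r)) x
        = ∑ t : Fin K, (∑ r ∈ Finset.range k, (f (W t (3 * r)) + f (W t (3 * r + 1)))
            + (if e = 2 then f (W t (3 * k)) else 0)) :=
          Finset.sum_congr rfl fun t _ => hsum_t t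
      _ = (∑ t : Fin K, ∑ r ∈ Finset.range k, (f (W t (3 * r)) + f (W t (3 * r + 1))))
            + ∑ t : Fin K, (if e = 2 then f (W t (3 * k)) else 0) :=
          Finset.sum_add_distrib
      _ = (∑ r ∈ Finset.range k, ∑ t : Fin K, (f (W t (3 * r)) + f (W t (3 * r + 1))))
            + ∑ t : Fin K, (if e = 2 then f (W t (3 * k)) else 0) := by
          rw [Finset.sum_comm]
      _ = (∑ r ∈ Finset.range k, (2 * dotp c x))
            + (if e = 2 then dotp c x else 0) := by
          congr 1
          · refine Finset.sum_congr rfl fun r hr => ?_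
            have hrk := Finset.mem_range.1 hr
            rw [Finset.sum_add_distrib, hshift (3 * r) (by omega),
              hshift (3 * r + 1) (by omega)]
            ring
          · by_cases he2 : e = 2
            · simp only [if_pos he2]
              exact hshift (3 * k) (by omega)
            · simp only [if_neg he2]
              exact Finset.sum_const_zero
      _ = (2 * (k : ℚ) + (if e = 2 then 1 else 0)) * dotp c x := by
          rw [Finset.sum_const, Finset.card_range, nsmul_eq_mul]
          split_ifs <;> push_cast <;> ring
  have hbound : ∑ t : Fin K, ∑ r ∈ Finset.range (k + 1), dotp (cutVec c π (SF t r)) x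
      ≤ (K : ℚ) * dotp c xI := by
    calc ∑ t : Fin K, ∑ r ∈ Finset.range (k + 1), dotp (cutVec c π (SF t r)) x
        ≤ ∑ _t : Fin K, dotp c xI := Finset.sum_le_sum fun t _ => hrot t
      _ = (K : ℚ) * dotp c xI := by
          rw [Finset.sum_const, Finset.card_univ, Fintype.card_fin, nsmul_eq_mul]
  rw [← htotal]
  exact hbound
-- MASTER END

/-- **Theorem (natural sparse closure of cycles, upper bounds).** If the packing interaction
graph is a cycle of length `K`, then `z^{N.S.} ≤ (3/2)·z^I` if `K = 3k`,
`z^{N.S.} ≤ ((3k+1)/(2k))·z^I` if `K = 3k+1`, and `z^{N.S.} ≤ ((3k+2)/(2k+1))·z^I`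
if `K = 3k+2` (for `k ∈ ℤ_{++}`). -/
theorem packing_naturalSparse_cycle_bound
    {m n K : ℕ}
    (A : Matrix (Fin m) (Fin n) ℚ) (b : Fin m → ℚ) (c : Fin n → ℚ) (L : Finset (Fin n))
    (hA : ∀ i j, 0 ≤ A i j) (hb : ∀ i, 0 ≤ b i) (hc : ∀ j, 0 ≤ c j)
    (π : Fin n → Fin K) (hπ : Function.Surjective π)
    (hK : 3 ≤ K)
    (hcycle : Nonempty (packGraph A π ≃g SimpleGraph.cycleGraph K))
    (xI : Fin n → ℚ) (hxI : xI ∈ intHull A b L)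
    (hxImax : ∀ x ∈ intHull A b L, dotp c x ≤ dotp c xI) :
    (∀ k : ℕ, 0 < k → K = 3 * k →
      ∀ x ∈ naturalSparseClosure A b L π, dotp c x ≤ (3 / 2 : ℚ) * dotp c xI) ∧
    (∀ k : ℕ, 0 < k → K = 3 * k + 1 →
      ∀ x ∈ naturalSparseClosure A b L π,
        dotp c x ≤ ((3 * (k : ℚ) + 1) / (2 * (k : ℚ))) * dotp c xI) ∧
    (∀ k : ℕ, 0 < k → K = 3 * k + 2 →
      ∀ x ∈ naturalSparseClosure A b L π,
        dotp c x ≤ ((3 * (k : ℚ) + 2) / (2 * (k : ℚ) + 1)) * dotp c xI) := by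
  obtain ⟨e0⟩ := hcycle
  refine ⟨?_, ?_, ?_⟩
  · intro k hk hKeq x hx
    have hm := master_bound A b c L hA hb hc π hK e0 xI hxImax k 0 hk (by omega)
      (by omega) x hx
    simp only [show (0 : ℕ) ≠ 2 by decide, if_neg] at hm
    norm_num at hm
    have hKc : (K : ℚ) = 3 * (k : ℚ) := by rw [hKeq]; push_cast; ring
    rw [hKc] at hm
    have hk' : (0 : ℚ) < (k : ℚ) := by exact_mod_cast hk
    have h2 : 2 * dotp c x ≤ 3 * dotp c xI := by
      have h3 : (k : ℚ) * (2 * dotp c x) ≤ (k : ℚ) * (3 * dotp c xI) := by linarith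
      exact le_of_mul_le_mul_left h3 hk'
    linarith
  · intro k hk hKeq x hx
    have hm := master_bound A b c L hA hb hc π hK e0 xI hxImax k 1 hk (by omega)
      (by omega) x hx
    simp only [show (1 : ℕ) ≠ 2 by decide, if_neg] at hm
    norm_num at hm
    have hKc : (K : ℚ) = 3 * (k : ℚ) + 1 := by rw [hKeq]; push_cast; ring
    rw [hKc] at hm
    have hk' : (0 : ℚ) < (k : ℚ) := by exact_mod_cast hk
    rw [div_mul_eq_mul_div, le_div_iff₀ (by linarith : (0 : ℚ) < 2 * (k : ℚ))]
    linarith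
  · intro k hk hKeq x hx
    have hm := master_bound A b c L hA hb hc π hK e0 xI hxImax k 2 hk (by omega)
      (by omega) x hx
    simp only [if_pos] at hm
    have hKc : (K : ℚ) = 3 * (k : ℚ) + 2 := by rw [hKeq]; push_cast; ring
    rw [hKc] at hm
    have hk' : (0 : ℚ) < (k : ℚ) := by exact_mod_cast hk
    rw [div_mul_eq_mul_div, le_div_iff₀ (by linarith : (0 : ℚ) < 2 * (k : ℚ) + 1)]
    linarith
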